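/- Let x > 0 and s > 1 be real numbers. Then ∑_{b=1}^{∞} (x)_{(b)} / (x+s)_{(b)} converges and equals x/(s−1). Equivalently, if X has the Beta(x, s) distribution, then ∑_{b≥1} E[X^b] = E[X/(1−X)] = x/(s−1). -/

import Mathlib

open MeasureTheory Finset

/-- Rising factorial `(x)_{(n)} = ∏_{j=0}^{n-1} (x+j)`. -/
noncomputable def risingFactorial (x : ℝ) (n : ℕ) : ℝ := ∏ j ∈ Finset.range n, (x + j)

/-- Beta function `B(a,b) = Γ(a)Γ(b)/Γ(a+b)`. -/
noncomputable def betaFn (a b : ℝ) : ℝ := Real.Gamma a * Real.Gamma b / Real.Gamma (a + b)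

/-- The partition of `{1,…,n}` induced by an allocation vector `z ∈ (ℕ₊)ⁿ`:
its blocks are the nonempty level sets `{i : z_i = j}`. -/
def Cz {n : ℕ} (z : Fin n → ℕ+) : Finset (Finset (Fin n)) :=
  Finset.image (fun i => Finset.univ.filter fun i' => z i' = z i) Finset.univ

/-- `m(z) = max {z₁,…,zₙ}`. -/
def mz {n : ℕ} (z : Fin n → ℕ+) : ℕ := Finset.univ.sup fun i => (z i : ℕ)

/-- `g_j(z) = #{i : z_i ≥ j}`. -/
def gz {n : ℕ} (z : Fin n → ℕ+) (j : ℕ) : ℕ :=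
  (Finset.univ.filter fun i => j ≤ (z i : ℕ)).card

/-- Access the `j`-th coordinate (1-indexed) of a vector `v : Fin m → ℝ`. -/
noncomputable def stk {m : ℕ} (v : Fin m → ℝ) (j : ℕ) : ℝ :=
  if h : j - 1 < m then v ⟨j - 1, h⟩ else 0

/-- `C` is a partition of `{1,…,n}`: all blocks are nonempty and every element
belongs to exactly one block. -/
def IsPartition {n : ℕ} (C : Finset (Finset (Fin n))) : Prop :=
  (∀ c ∈ C, c.Nonempty) ∧ ∀ i : Fin n, ∃! c, c ∈ C ∧ i ∈ c

lemma rf_succ (x : ℝ) (n : ℕ) : risingFactorial x (n + 1) = risingFactorial x n * (x + n) :=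
  Finset.prod_range_succ _ _

lemma rf_pos {x : ℝ} (hx : 0 < x) (n : ℕ) : 0 < risingFactorial x n :=
  Finset.prod_pos fun j _ => by positivity

/-- For `x > 0` and `s > 1`,
`∑_{b=1}^∞ (x)_{(b)} / (x+s)_{(b)}` converges and equals `x/(s-1)`. -/
theorem sum_risingFactorial_ratio (x s : ℝ) (hx : 0 < x) (hs : 1 < s) :
    HasSum (fun b : ℕ+ => risingFactorial x (b : ℕ) / risingFactorial (x + s) (b : ℕ))
      (x / (s - 1)) := by
  have hxs : 0 < x + s := by linarith
  have hs1 : 0 < s - 1 := by linarith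
  set u : ℕ → ℝ := fun b => risingFactorial x (b + 1) / ((s - 1) * risingFactorial (x + s) b)
    with hu
  set f : ℕ → ℝ := fun b => risingFactorial x (b + 1) / risingFactorial (x + s) (b + 1) with hf
  have hupos : ∀ b, 0 < u b := fun b =>
    div_pos (rf_pos hx _) (mul_pos hs1 (rf_pos hxs _))
  have hfpos : ∀ b, 0 < f b := fun b => div_pos (rf_pos hx _) (rf_pos hxs _)
  -- telescoping identity
  have key : ∀ b : ℕ, f b = u b - u (b + 1) := by
    intro b
    have h1 : risingFactorial (x + s) (b + 1) = risingFactorial (x + s) b * (x + s + b) :=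
      rf_succ _ _
    have h2 : risingFactorial x (b + 1 + 1) = risingFactorial x (b + 1) * (x + (b : ℝ) + 1) := by
      rw [rf_succ]; push_cast; ring
    have hne1 : s - 1 ≠ 0 := hs1.ne'
    have hne2 : risingFactorial (x + s) b ≠ 0 := (rf_pos hxs b).ne'
    have hne3 : x + s + (b : ℝ) ≠ 0 := by positivity
    simp only [hf, hu, h2, h1]
    field_simp
    ring
  -- partial sums
  have hsum : ∀ n, ∑ i ∈ Finset.range n, f i = u 0 - u n := by
    intro n
    calc ∑ i ∈ Finset.range n, f i = ∑ i ∈ Finset.range n, (u i - u (i + 1)) :=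
          Finset.sum_congr rfl fun i _ => key i
      _ = u 0 - u n := Finset.sum_range_sub' u n
  have hsummable : Summable f :=
    summable_of_sum_range_le (c := u 0) (fun n => (hfpos n).le)
      (fun n => by rw [hsum]; linarith [hupos n])
  -- u is antitone
  have hanti : Antitone u := antitone_nat_of_succ_le fun n => by
    have := key n; have := hfpos n; linarith
  have hbdd : BddBelow (Set.range u) := ⟨0, by rintro _ ⟨b, rfl⟩; exact (hupos b).le⟩
  -- infimum is zero
  have hL0 : 0 ≤ ⨅ b, u b := le_ciInf fun b => (hupos b).le
  have hLeq : ⨅ b, u b = 0 := by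
    by_contra hL
    have hLpos : 0 < ⨅ b, u b := lt_of_le_of_ne hL0 (Ne.symm hL)
    set L := ⨅ b, u b
    have hfb : ∀ b : ℕ, L * (s - 1) / (x + s) * (1 / (b + 1)) ≤ f b := by
      intro b
      have huL : L ≤ u b := ciInf_le hbdd b
      have hb1 : (0:ℝ) < x + s + b := by positivity
      have hfe : f b = u b * ((s - 1) / (x + s + b)) := by
        have hne1 : s - 1 ≠ 0 := hs1.ne'
        have hne2 : risingFactorial (x + s) b ≠ 0 := (rf_pos hxs b).ne'
        have hne3 : x + s + (b : ℝ) ≠ 0 := hb1.ne'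
        simp only [hf, hu, rf_succ (x + s) b]
        field_simp
      rw [hfe]
      have h1 : L * (s - 1) / (x + s) * (1 / (b + 1)) ≤ L * ((s - 1) / (x + s + b)) := by
        rw [div_mul_div_comm, mul_one, mul_div_assoc]
        apply mul_le_mul_of_nonneg_left _ hLpos.le
        apply div_le_div_of_nonneg_left hs1.le hb1
        nlinarith [hb1, Nat.cast_nonneg (α := ℝ) b]
      refine h1.trans ?_
      exact mul_le_mul_of_nonneg_right huL (by positivity)
    have hc : (0:ℝ) < L * (s - 1) / (x + s) := by positivity
    have hsum2 : Summable (fun b : ℕ => L * (s - 1) / (x + s) * (1 / ((b:ℝ) + 1))) :=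
      Summable.of_nonneg_of_le (fun b => by positivity) hfb hsummable
    have hsum3 : Summable (fun b : ℕ => 1 / ((b:ℝ) + 1)) :=
      (summable_mul_left_iff hc.ne').mp hsum2
    have hsum4 : Summable (fun n : ℕ => 1 / (n : ℝ)) := by
      rw [← summable_nat_add_iff 1]
      simpa using hsum3
    exact Real.not_summable_one_div_natCast hsum4
  -- limit of u is 0
  have hulim : Filter.Tendsto u Filter.atTop (nhds 0) := by
    have := tendsto_atTop_ciInf hanti hbdd
    rwa [hLeq] at this
  have hu0 : u 0 = x / (s - 1) := by
    simp [hu, risingFactorial]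
  -- HasSum over ℕ
  have hN : HasSum f (x / (s - 1)) := by
    rw [hasSum_iff_tendsto_nat_of_nonneg (fun i => (hfpos i).le)]
    have h : Filter.Tendsto (fun n => u 0 - u n) Filter.atTop (nhds (u 0)) := by
      simpa using Filter.Tendsto.const_sub (u 0) hulim
    rw [show (fun n => ∑ i ∈ Finset.range n, f i) = fun n => u 0 - u n from funext hsum, ← hu0]
    exact h
  -- transfer to ℕ+
  refine (Equiv.pnatEquivNat.symm.hasSum_iff).mp ?_
  have he : ((fun b : ℕ+ => risingFactorial x (b : ℕ) / risingFactorial (x + s) (b : ℕ)) ∘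
      Equiv.pnatEquivNat.symm) = f := by
    funext n
    simp [hf, Equiv.pnatEquivNat]
  rw [he]
  exact hN
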